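/- Let E ∈ ℝ² with E ≠ 0, let R, X ∈ ℝ with R ≠ 0 and X ≠ 0, let Imax > 0, and let M₁ ≠ M₂ be two distinct matrices from {M_P, M_Q, M_V}. Let f₁, f₂ : ℝ → ℝ be convex and differentiable, and let ρ > 0. Then every minimizer W* of the function W ↦ f₁(Tr(M₁ W)) + f₂(Tr(M₂ W)) + ρ·Tr(W) over the set 𝒲 satisfies rank(W*) ≤ 1. -/

import Mathlib

/-- The matrix `J` with rows `(0,1)` and `(-1,0)`. -/
def Jmat : Matrix (Fin 2) (Fin 2) ℝ := !![0, 1; -1, 0]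

/-- The impedance matrix `Z` with rows `(R,-X)` and `(X,R)`. -/
def Zmat (R X : ℝ) : Matrix (Fin 2) (Fin 2) ℝ := !![R, -X; X, R]

/-- Interpret a plain vector `Fin 2 → ℝ` as an element of Euclidean space `ℝ²`. -/
noncomputable def toE (v : Fin 2 → ℝ) : EuclideanSpace ℝ (Fin 2) := WithLp.toLp 2 v

/-- The vector `J E ∈ ℝ²`. -/
noncomputable def Jv (E : EuclideanSpace ℝ (Fin 2)) : EuclideanSpace ℝ (Fin 2) :=
  toE (Jmat.mulVec (fun i => E i))

/-- The vector `Zᵀ E ∈ ℝ²`. -/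
noncomputable def ZtE (R X : ℝ) (E : EuclideanSpace ℝ (Fin 2)) : EuclideanSpace ℝ (Fin 2) :=
  toE ((Zmat R X).transpose.mulVec (fun i => E i))

/-- `M(α, a, ζ)`: the 3×3 symmetric matrix with top-left 2×2 block `α·I₂`,
top-right column `a/2`, bottom-left row `aᵀ/2`, and bottom-right entry `ζ`. -/
noncomputable def Mmat (α : ℝ) (a : EuclideanSpace ℝ (Fin 2)) (ζ : ℝ) :
    Matrix (Fin 3) (Fin 3) ℝ :=
  !![α, 0, a 0 / 2; 0, α, a 1 / 2; a 0 / 2, a 1 / 2, ζ]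

/-- `M_P := M(3R/2, (3/2)E, 0)`. -/
noncomputable def MP (E : EuclideanSpace ℝ (Fin 2)) (R : ℝ) : Matrix (Fin 3) (Fin 3) ℝ :=
  Mmat (3 * R / 2) ((3 / 2 : ℝ) • E) 0

/-- `M_Q := M(3X/2, (3/2)JE, 0)`. -/
noncomputable def MQ (E : EuclideanSpace ℝ (Fin 2)) (X : ℝ) : Matrix (Fin 3) (Fin 3) ℝ :=
  Mmat (3 * X / 2) ((3 / 2 : ℝ) • Jv E) 0

/-- `M_V := M(R² + X², 2ZᵀE, ‖E‖²)`. -/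
noncomputable def MV (E : EuclideanSpace ℝ (Fin 2)) (R X : ℝ) : Matrix (Fin 3) (Fin 3) ℝ :=
  Mmat (R ^ 2 + X ^ 2) ((2 : ℝ) • ZtE R X E) (‖E‖ ^ 2)

/-- The SDP feasible set `𝒲`. -/
def Wset (Imax : ℝ) : Set (Matrix (Fin 3) (Fin 3) ℝ) :=
  {W | W.PosSemidef ∧ W 0 0 + W 1 1 ≤ Imax ^ 2 ∧ W 2 2 = 1}


open Matrix

lemma aux_dot_nonneg (x : Fin 3 → ℝ) : 0 ≤ x ⬝ᵥ x := by
  simp only [dotProduct, Fin.sum_univ_three]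
  nlinarith [sq_nonneg (x 0), sq_nonneg (x 1), sq_nonneg (x 2)]

lemma aux_dot_pos (x : Fin 3 → ℝ) (hx : x ≠ 0) : 0 < x ⬝ᵥ x :=
  lt_of_le_of_ne (aux_dot_nonneg x) (fun h => hx (dotProduct_self_eq_zero.mp h.symm))

lemma aux_term (b xi xj S : ℝ) (h : xi ^ 2 + xj ^ 2 ≤ 2 * S) : b * xi * xj ≤ |b| * S := by
  have h1 : |xi * xj| ≤ S := by
    cases abs_cases (xi * xj) with
    | inl hc => nlinarith [sq_nonneg (xi - xj)]
    | inr hc => nlinarith [sq_nonneg (xi + xj)]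
  calc b * xi * xj ≤ |b * xi * xj| := le_abs_self _
    _ = |b| * |xi * xj| := by rw [mul_assoc, abs_mul]
    _ ≤ |b| * S := mul_le_mul_of_nonneg_left h1 (abs_nonneg b)

/-- entrywise bound on a quadratic form -/
lemma aux_quad_bound (B : Matrix (Fin 3) (Fin 3) ℝ) (x : Fin 3 → ℝ) :
    |x ⬝ᵥ B.mulVec x| ≤ (∑ i, ∑ j, |B i j|) * (x ⬝ᵥ x) := by
  set S := x ⬝ᵥ x with hS
  have hSd : S = x 0 * x 0 + x 1 * x 1 + x 2 * x 2 := by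
    rw [hS]; simp [dotProduct, Fin.sum_univ_three]
  have k00 : x 0 ^ 2 + x 0 ^ 2 ≤ 2 * S := by rw [hSd]; nlinarith [sq_nonneg (x 1), sq_nonneg (x 2)]
  have k01 : x 0 ^ 2 + x 1 ^ 2 ≤ 2 * S := by rw [hSd]; nlinarith [sq_nonneg (x 0), sq_nonneg (x 1), sq_nonneg (x 2)]
  have k02 : x 0 ^ 2 + x 2 ^ 2 ≤ 2 * S := by rw [hSd]; nlinarith [sq_nonneg (x 0), sq_nonneg (x 1), sq_nonneg (x 2)]
  have k11 : x 1 ^ 2 + x 1 ^ 2 ≤ 2 * S := by rw [hSd]; nlinarith [sq_nonneg (x 0), sq_nonneg (x 2)]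
  have k12 : x 1 ^ 2 + x 2 ^ 2 ≤ 2 * S := by rw [hSd]; nlinarith [sq_nonneg (x 0), sq_nonneg (x 1), sq_nonneg (x 2)]
  have k22 : x 2 ^ 2 + x 2 ^ 2 ≤ 2 * S := by rw [hSd]; nlinarith [sq_nonneg (x 0), sq_nonneg (x 1)]
  have k10 : x 1 ^ 2 + x 0 ^ 2 ≤ 2 * S := by linarith
  have k20 : x 2 ^ 2 + x 0 ^ 2 ≤ 2 * S := by linarith
  have k21 : x 2 ^ 2 + x 1 ^ 2 ≤ 2 * S := by linarith
  rw [abs_le]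
  constructor
  · have h00 := aux_term (-(B 0 0)) (x 0) (x 0) S k00
    have h01 := aux_term (-(B 0 1)) (x 0) (x 1) S k01
    have h02 := aux_term (-(B 0 2)) (x 0) (x 2) S k02
    have h10 := aux_term (-(B 1 0)) (x 1) (x 0) S k10
    have h11 := aux_term (-(B 1 1)) (x 1) (x 1) S k11
    have h12 := aux_term (-(B 1 2)) (x 1) (x 2) S k12
    have h20 := aux_term (-(B 2 0)) (x 2) (x 0) S k20
    have h21 := aux_term (-(B 2 1)) (x 2) (x 1) S k21
    have h22 := aux_term (-(B 2 2)) (x 2) (x 2) S k22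
    rw [abs_neg] at h00 h01 h02 h10 h11 h12 h20 h21 h22
    simp only [dotProduct, Matrix.mulVec, Fin.sum_univ_three]
    linarith [h00, h01, h02, h10, h11, h12, h20, h21, h22]
  · have h00 := aux_term (B 0 0) (x 0) (x 0) S k00
    have h01 := aux_term (B 0 1) (x 0) (x 1) S k01
    have h02 := aux_term (B 0 2) (x 0) (x 2) S k02
    have h10 := aux_term (B 1 0) (x 1) (x 0) S k10
    have h11 := aux_term (B 1 1) (x 1) (x 1) S k11
    have h12 := aux_term (B 1 2) (x 1) (x 2) S k12
    have h20 := aux_term (B 2 0) (x 2) (x 0) S k20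
    have h21 := aux_term (B 2 1) (x 2) (x 1) S k21
    have h22 := aux_term (B 2 2) (x 2) (x 2) S k22
    simp only [dotProduct, Matrix.mulVec, Fin.sum_univ_three]
    linarith [h00, h01, h02, h10, h11, h12, h20, h21, h22]

/-- symmetry of the bilinear form -/
lemma aux_symm (A : Matrix (Fin 3) (Fin 3) ℝ) (hsym : Aᵀ = A) (x y : Fin 3 → ℝ) :
    y ⬝ᵥ A.mulVec x = x ⬝ᵥ A.mulVec y := by
  rw [dotProduct_mulVec, ← mulVec_transpose, hsym, dotProduct_comm]

/-- Cauchy–Schwarz for a PSD quadratic form -/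
lemma aux_cs (A : Matrix (Fin 3) (Fin 3) ℝ) (hsym : Aᵀ = A)
    (hpsd : ∀ z, 0 ≤ z ⬝ᵥ A.mulVec z) (x y : Fin 3 → ℝ) :
    (x ⬝ᵥ A.mulVec y) ^ 2 ≤ (x ⬝ᵥ A.mulVec x) * (y ⬝ᵥ A.mulVec y) := by
  have h : ∀ t : ℝ, 0 ≤ (y ⬝ᵥ A.mulVec y) * (t * t) + (2 * (x ⬝ᵥ A.mulVec y)) * t
      + (x ⬝ᵥ A.mulVec x) := by
    intro t
    have h0 := hpsd (x + t • y)
    have hexp : (x + t • y) ⬝ᵥ A.mulVec (x + t • y)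
        = (x ⬝ᵥ A.mulVec x) + t * (x ⬝ᵥ A.mulVec y) + t * (y ⬝ᵥ A.mulVec x)
          + t * t * (y ⬝ᵥ A.mulVec y) := by
      rw [mulVec_add, mulVec_smul, dotProduct_add, add_dotProduct, add_dotProduct,
        dotProduct_smul, dotProduct_smul, smul_dotProduct, smul_dotProduct]
      simp only [smul_eq_mul]
      ring
    rw [hexp, aux_symm A hsym x y] at h0
    linarith
  have hd := discrim_le_zero h
  rw [discrim] at hd
  nlinarith [hd]

/-- for PSD matrices, a null vector of the form is in the kernel -/
lemma aux_ker (A : Matrix (Fin 3) (Fin 3) ℝ) (hsym : Aᵀ = A)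
    (hpsd : ∀ z, 0 ≤ z ⬝ᵥ A.mulVec z) (x : Fin 3 → ℝ)
    (hx : x ⬝ᵥ A.mulVec x ≤ 0) : A.mulVec x = 0 := by
  have h := aux_cs A hsym hpsd (A.mulVec x) x
  have h0 : x ⬝ᵥ A.mulVec x = 0 := le_antisymm hx (hpsd x)
  rw [h0, mul_zero] at h
  have h2 : (A.mulVec x) ⬝ᵥ (A.mulVec x) = 0 := by
    nlinarith [aux_dot_nonneg (A.mulVec x)]
  exact dotProduct_self_eq_zero.mp h2

/-- plain Cauchy-Schwarz -/
lemma aux_dot_cs (u r : Fin 3 → ℝ) : (u ⬝ᵥ r) ^ 2 ≤ (u ⬝ᵥ u) * (r ⬝ᵥ r) := by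
  have h := aux_cs 1 (by simp) (fun z => by rw [one_mulVec]; exact aux_dot_nonneg z) u r
  rwa [one_mulVec, one_mulVec] at h

/-- quantitative positive-definiteness bound -/
lemma aux_pd_bound (A : Matrix (Fin 3) (Fin 3) ℝ) (hsym : Aᵀ = A)
    (hpsd : ∀ z, 0 ≤ z ⬝ᵥ A.mulVec z)
    (hpd : ∀ x, x ≠ 0 → A.mulVec x ≠ 0) :
    ∃ lam > 0, ∀ x, lam * (x ⬝ᵥ x) ≤ x ⬝ᵥ A.mulVec x := by
  have hherm : A.IsHermitian := by
    ext i j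
    rw [conjTranspose_apply]
    simpa using congrFun (congrFun hsym i) j
  have hposdef : A.PosDef := by
    refine Matrix.PosDef.of_dotProduct_mulVec_pos hherm (fun x hx => ?_)
    have h1 : A.mulVec x ≠ 0 := hpd x hx
    have h2 : 0 ≤ x ⬝ᵥ A.mulVec x := hpsd x
    have h3 : x ⬝ᵥ A.mulVec x ≠ 0 := by
      intro h0
      exact h1 (aux_ker A hsym hpsd x (le_of_eq h0))
    simpa using lt_of_le_of_ne h2 (Ne.symm h3)
  have hdet : IsUnit A.det := isUnit_iff_ne_zero.mpr hposdef.det_pos.ne'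
  have hinv : A * A⁻¹ = 1 := Matrix.mul_nonsing_inv A hdet
  set K := (∑ i, ∑ j, |A⁻¹ i j|) + 1 with hK
  have hKpos : 0 < K := by
    rw [hK]
    have : (0:ℝ) ≤ ∑ i, ∑ j, |A⁻¹ i j| := by positivity
    linarith
  refine ⟨1 / K, by positivity, fun x => ?_⟩
  rcases eq_or_ne x 0 with rfl | hx
  · simp
  · have hxx : 0 < x ⬝ᵥ x := lt_of_le_of_ne (aux_dot_nonneg x)
      (fun h => hx (dotProduct_self_eq_zero.mp h.symm))
    set y := A⁻¹.mulVec x with hy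
    have h1 : A.mulVec y = x := by
      rw [hy, mulVec_mulVec, hinv, one_mulVec]
    have h2 : (x ⬝ᵥ A.mulVec y) ^ 2 ≤ (x ⬝ᵥ A.mulVec x) * (y ⬝ᵥ A.mulVec y) :=
      aux_cs A hsym hpsd x y
    rw [h1, dotProduct_comm y x] at h2
    have h4 : x ⬝ᵥ y ≤ (K - 1) * (x ⬝ᵥ x) := by
      have hK1 : K - 1 = ∑ i, ∑ j, |A⁻¹ i j| := by rw [hK]; ring
      rw [hK1, hy]
      exact (abs_le.mp (aux_quad_bound A⁻¹ x)).2
    have hq : 0 ≤ x ⬝ᵥ A.mulVec x := hpsd x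
    rw [div_mul_eq_mul_div, one_mul, div_le_iff₀ hKpos]
    have h6 : (x ⬝ᵥ A.mulVec x) * (x ⬝ᵥ y) ≤ (x ⬝ᵥ A.mulVec x) * ((K - 1) * (x ⬝ᵥ x)) :=
      mul_le_mul_of_nonneg_left h4 hq
    nlinarith [h2, h6, hq, hxx, mul_nonneg hq (le_of_lt hxx), mul_pos hxx hxx]

/-- perturbation in the positive definite case -/
lemma aux_perturb_pd (W D : Matrix (Fin 3) (Fin 3) ℝ) (hWsym : Wᵀ = W)
    (hWpsd : ∀ z, 0 ≤ z ⬝ᵥ W.mulVec z)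
    (hpd : ∀ x, x ≠ 0 → W.mulVec x ≠ 0) :
    ∃ t > 0, ∀ x, t * (x ⬝ᵥ D.mulVec x) ≤ x ⬝ᵥ W.mulVec x := by
  obtain ⟨lam, hlam, hbound⟩ := aux_pd_bound W hWsym hWpsd hpd
  set KD := (∑ i, ∑ j, |D i j|) + 1 with hKD
  have hKDpos : 0 < KD := by
    rw [hKD]
    have : (0:ℝ) ≤ ∑ i, ∑ j, |D i j| := by positivity
    linarith
  refine ⟨lam / KD, by positivity, fun x => ?_⟩
  have h1 : x ⬝ᵥ D.mulVec x ≤ (KD - 1) * (x ⬝ᵥ x) := by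
    have hK1 : KD - 1 = ∑ i, ∑ j, |D i j| := by rw [hKD]; ring
    rw [hK1]
    exact (abs_le.mp (aux_quad_bound D x)).2
  have h2 := hbound x
  have hxx := aux_dot_nonneg x
  rcases le_or_gt (x ⬝ᵥ D.mulVec x) 0 with h | h
  · have : lam / KD * (x ⬝ᵥ D.mulVec x) ≤ 0 := by
      apply mul_nonpos_of_nonneg_of_nonpos (by positivity) h
    linarith [hWpsd x]
  · have h3 : lam / KD * (x ⬝ᵥ D.mulVec x) ≤ lam / KD * ((KD - 1) * (x ⬝ᵥ x)) :=
      mul_le_mul_of_nonneg_left h1 (by positivity)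
    have h4 : lam / KD * ((KD - 1) * (x ⬝ᵥ x)) ≤ lam * (x ⬝ᵥ x) := by
      rw [div_mul_eq_mul_div, div_le_iff₀ hKDpos]
      nlinarith [mul_nonneg (le_of_lt hlam) hxx]
    linarith

set_option maxHeartbeats 2000000 in
/-- perturbation in the rank two case -/
lemma aux_perturb (W D : Matrix (Fin 3) (Fin 3) ℝ) (hWsym : Wᵀ = W) (hDsym : Dᵀ = D)
    (hWpsd : ∀ z, 0 ≤ z ⬝ᵥ W.mulVec z)
    (v : Fin 3 → ℝ) (hv : v ≠ 0) (hWv : W.mulVec v = 0)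
    (hker : ∀ w, W.mulVec w = 0 → ∃ c : ℝ, w = c • v)
    (hDv : v ⬝ᵥ D.mulVec v = -1) :
    ∃ t > 0, ∀ x, t * (x ⬝ᵥ D.mulVec x) ≤ x ⬝ᵥ W.mulVec x := by
  classical
  set A := W + vecMulVec v v with hA
  have hAsym : Aᵀ = A := by
    rw [hA, transpose_add, hWsym]
    congr 1
    ext i j
    simp [vecMulVec, mul_comm]
  have hAq : ∀ x, x ⬝ᵥ A.mulVec x = x ⬝ᵥ W.mulVec x + (v ⬝ᵥ x) ^ 2 := by
    intro x
    rw [hA, add_mulVec, dotProduct_add]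
    congr 1
    simp only [vecMulVec, Matrix.mulVec, dotProduct, Fin.sum_univ_three, Matrix.of_apply]
    ring
  have hApsd : ∀ x, 0 ≤ x ⬝ᵥ A.mulVec x := by
    intro x; rw [hAq]; have := hWpsd x; positivity
  have hvv : 0 < v ⬝ᵥ v := aux_dot_pos v hv
  have hApd : ∀ x, x ≠ 0 → A.mulVec x ≠ 0 := by
    intro x hx hAx
    have h0 : x ⬝ᵥ A.mulVec x = 0 := by rw [hAx, dotProduct_zero]
    rw [hAq] at h0
    have hW0 : x ⬝ᵥ W.mulVec x = 0 := by nlinarith [hWpsd x, sq_nonneg (v ⬝ᵥ x)]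
    have hvx : v ⬝ᵥ x = 0 := by nlinarith [hWpsd x, sq_nonneg (v ⬝ᵥ x)]
    obtain ⟨c, rfl⟩ := hker x (aux_ker W hWsym hWpsd x (le_of_eq hW0))
    rw [dotProduct_smul, smul_eq_mul] at hvx
    rcases mul_eq_zero.mp hvx with hc | hc
    · exact hx (by rw [hc, zero_smul])
    · exact absurd hc hvv.ne'
  obtain ⟨lam, hlam, hbound⟩ := aux_pd_bound A hAsym hApsd hApd
  set u := D.mulVec v with hu
  set KD := (∑ i, ∑ j, |D i j|) + 1 with hKD
  have hKDpos : 0 < KD := by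
    rw [hKD]
    have : (0:ℝ) ≤ ∑ i, ∑ j, |D i j| := by positivity
    linarith
  have huu := aux_dot_nonneg u
  set t := lam / (KD + u ⬝ᵥ u + 1) with ht
  have hden : 0 < KD + u ⬝ᵥ u + 1 := by linarith
  have htpos : 0 < t := by rw [ht]; positivity
  refine ⟨t, htpos, fun x => ?_⟩
  set s := (v ⬝ᵥ x) / (v ⬝ᵥ v) with hs
  set r := x - s • v with hr
  have hx : x = r + s • v := by rw [hr]; abel
  have hvr : v ⬝ᵥ r = 0 := by
    rw [hr, dotProduct_sub, dotProduct_smul, smul_eq_mul, hs,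
      div_mul_cancel₀ _ hvv.ne', sub_self]
  have hrWv : r ⬝ᵥ W.mulVec v = 0 := by rw [hWv, dotProduct_zero]
  have hvWr : v ⬝ᵥ W.mulVec r = 0 := by rw [aux_symm W hWsym r v, hWv, dotProduct_zero]
  have hWx : x ⬝ᵥ W.mulVec x = r ⬝ᵥ W.mulVec r := by
    rw [hx, mulVec_add, mulVec_smul, dotProduct_add, add_dotProduct, add_dotProduct,
      dotProduct_smul, dotProduct_smul, smul_dotProduct, smul_dotProduct]
    simp only [smul_eq_mul]
    rw [hrWv, hWv]
    simp [hvWr]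
  have hvDr : v ⬝ᵥ D.mulVec r = u ⬝ᵥ r := by
    rw [aux_symm D hDsym r v, ← hu, dotProduct_comm]
  have hrDv : r ⬝ᵥ D.mulVec v = u ⬝ᵥ r := by rw [← hu, dotProduct_comm]
  have hDx : x ⬝ᵥ D.mulVec x = r ⬝ᵥ D.mulVec r + 2 * s * (u ⬝ᵥ r) + s ^ 2 * (v ⬝ᵥ D.mulVec v) := by
    rw [hx, mulVec_add, mulVec_smul, dotProduct_add, add_dotProduct, add_dotProduct,
      dotProduct_smul, dotProduct_smul, smul_dotProduct, smul_dotProduct]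
    simp only [smul_eq_mul]
    rw [hrDv, hvDr]
    ring
  -- lower bound for r ⬝ W r
  have hb1 : lam * (r ⬝ᵥ r) ≤ r ⬝ᵥ W.mulVec r := by
    have := hbound r
    rw [hAq r, hvr] at this
    simpa using this
  have hb2 : r ⬝ᵥ D.mulVec r ≤ (KD - 1) * (r ⬝ᵥ r) := by
    have hK1 : KD - 1 = ∑ i, ∑ j, |D i j| := by rw [hKD]; ring
    rw [hK1]
    exact (abs_le.mp (aux_quad_bound D r)).2
  have hb3 : (u ⬝ᵥ r) ^ 2 ≤ (u ⬝ᵥ u) * (r ⬝ᵥ r) := aux_dot_cs u r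
  have hrr := aux_dot_nonneg r
  -- final assembly
  rw [hWx, hDx, hDv]
  have hcross : 2 * s * (u ⬝ᵥ r) ≤ s ^ 2 + (u ⬝ᵥ u) * (r ⬝ᵥ r) := by
    nlinarith [sq_nonneg (s - u ⬝ᵥ r), hb3]
  have htle : t * (KD + u ⬝ᵥ u) ≤ lam := by
    rw [ht, div_mul_eq_mul_div, div_le_iff₀ hden]
    nlinarith [hlam.le]
  have htKD : t * (KD - 1) ≤ t * KD := by nlinarith [htpos.le]
  nlinarith [mul_le_mul_of_nonneg_left hcross htpos.le,
    mul_le_mul_of_nonneg_left hb2 htpos.le,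
    mul_le_mul_of_nonneg_right htle hrr, hb1, htpos.le,
    mul_nonneg htpos.le hrr, mul_nonneg (mul_nonneg htpos.le huu) hrr]

lemma Jv_0 (E : EuclideanSpace ℝ (Fin 2)) : Jv E 0 = E 1 := by
  simp [Jv, toE, Jmat, Matrix.mulVec, dotProduct, Fin.sum_univ_two]
lemma Jv_1 (E : EuclideanSpace ℝ (Fin 2)) : Jv E 1 = -E 0 := by
  simp [Jv, toE, Jmat, Matrix.mulVec, dotProduct, Fin.sum_univ_two]
lemma ZtE_0 (R X : ℝ) (E : EuclideanSpace ℝ (Fin 2)) : ZtE R X E 0 = R * E 0 + X * E 1 := by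
  simp [ZtE, toE, Zmat, Matrix.mulVec, dotProduct, Fin.sum_univ_two, Matrix.transpose]
lemma ZtE_1 (R X : ℝ) (E : EuclideanSpace ℝ (Fin 2)) : ZtE R X E 1 = -X * E 0 + R * E 1 := by
  simp [ZtE, toE, Zmat, Matrix.mulVec, dotProduct, Fin.sum_univ_two, Matrix.transpose]
lemma smul_coord (c : ℝ) (E : EuclideanSpace ℝ (Fin 2)) (i : Fin 2) : (c • E) i = c * E i := rfl

lemma trace_Mmat_mul (α ζ : ℝ) (a : EuclideanSpace ℝ (Fin 2)) (B : Matrix (Fin 3) (Fin 3) ℝ) :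
    (Mmat α a ζ * B).trace = α * (B 0 0 + B 1 1)
      + (a 0 * (B 2 0 + B 0 2) + a 1 * (B 2 1 + B 1 2)) / 2 + ζ * B 2 2 := by
  simp [Mmat, Matrix.trace, Matrix.mul_apply, Fin.sum_univ_three, Matrix.diag]
  ring

lemma trace_expand (B : Matrix (Fin 3) (Fin 3) ℝ) : B.trace = B 0 0 + B 1 1 + B 2 2 := by
  simp [Matrix.trace, Fin.sum_univ_three, Matrix.diag]

lemma E_ne (E : EuclideanSpace ℝ (Fin 2)) (hE : E ≠ 0) : E 0 ^ 2 + E 1 ^ 2 > 0 := by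
  rcases eq_or_ne (E 0) 0 with h0 | h0
  · rcases eq_or_ne (E 1) 0 with h1 | h1
    · exfalso; apply hE; ext i; fin_cases i <;> simp [h0, h1]
    · nlinarith [sq_nonneg (E 0), pow_two_pos_of_ne_zero h1]
  · nlinarith [sq_nonneg (E 1), pow_two_pos_of_ne_zero h0]

lemma sym_herm (A : Matrix (Fin 3) (Fin 3) ℝ) (h : Aᵀ = A) : A.IsHermitian := by
  ext i j
  rw [conjTranspose_apply]
  simpa using congrFun (congrFun h i) j

lemma herm_sym (A : Matrix (Fin 3) (Fin 3) ℝ) (h : A.IsHermitian) : Aᵀ = A := by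
  ext i j
  have h2 := congrFun (congrFun h.eq i) j
  rw [conjTranspose_apply] at h2
  simpa using h2

lemma final_contra (Imax ρ : ℝ) (hρ : 0 < ρ) (M₁ M₂ : Matrix (Fin 3) (Fin 3) ℝ)
    (f₁ f₂ : ℝ → ℝ) (Wstar : Matrix (Fin 3) (Fin 3) ℝ) (hWstar : Wstar ∈ Wset Imax)
    (hmin : ∀ W ∈ Wset Imax,
      f₁ ((M₁ * Wstar).trace) + f₂ ((M₂ * Wstar).trace) + ρ * Wstar.trace ≤
      f₁ ((M₁ * W).trace) + f₂ ((M₂ * W).trace) + ρ * W.trace)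
    (D : Matrix (Fin 3) (Fin 3) ℝ) (t : ℝ) (ht : 0 < t)
    (hDsym : Dᵀ = D) (hD22 : D 2 2 = 0) (htr : D.trace = 1)
    (h1 : (M₁ * D).trace = 0) (h2 : (M₂ * D).trace = 0)
    (hpert : ∀ x, t * (x ⬝ᵥ D.mulVec x) ≤ x ⬝ᵥ Wstar.mulVec x) : False := by
  obtain ⟨hWpsd, hWI, hW22⟩ := hWstar
  set W' := Wstar - t • D with hW'
  have hW'psd : W'.PosSemidef := by
    refine Matrix.PosSemidef.of_dotProduct_mulVec_nonneg ?_ ?_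
    · apply hWpsd.1.sub
      apply sym_herm
      rw [transpose_smul, hDsym]
    · intro x
      have hx : (star x) ⬝ᵥ W'.mulVec x = x ⬝ᵥ Wstar.mulVec x - t * (x ⬝ᵥ D.mulVec x) := by
        rw [hW', sub_mulVec, smul_mulVec, dotProduct_sub, dotProduct_smul]
        simp [smul_eq_mul]
      rw [hx]
      linarith [hpert x]
  have hD01 : D 0 0 + D 1 1 = 1 := by
    have := trace_expand D
    rw [htr, hD22] at this
    linarith
  have hW'mem : W' ∈ Wset Imax := by
    refine ⟨hW'psd, ?_, ?_⟩
    · have e0 : W' 0 0 = Wstar 0 0 - t * D 0 0 := by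
        rw [hW']; simp [Matrix.sub_apply, Matrix.smul_apply, smul_eq_mul]
      have e1 : W' 1 1 = Wstar 1 1 - t * D 1 1 := by
        rw [hW']; simp [Matrix.sub_apply, Matrix.smul_apply, smul_eq_mul]
      rw [e0, e1]
      nlinarith [hD01]
    · have e2 : W' 2 2 = Wstar 2 2 - t * D 2 2 := by
        rw [hW']; simp [Matrix.sub_apply, Matrix.smul_apply, smul_eq_mul]
      rw [e2, hD22, hW22]; ring
  have htr1 : (M₁ * W').trace = (M₁ * Wstar).trace := by
    rw [hW', Matrix.mul_sub, Matrix.mul_smul, trace_sub, trace_smul, h1]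
    simp
  have htr2 : (M₂ * W').trace = (M₂ * Wstar).trace := by
    rw [hW', Matrix.mul_sub, Matrix.mul_smul, trace_sub, trace_smul, h2]
    simp
  have htrW : W'.trace = Wstar.trace - t := by
    rw [hW', trace_sub, trace_smul, htr, smul_eq_mul, mul_one]
  have := hmin W' hW'mem
  rw [htr1, htr2, htrW] at this
  nlinarith

set_option maxHeartbeats 3000000 in
/-- Lemma 1: trace regularization with any positive weight `ρ` forces
minimizers of `W ↦ f₁(Tr(M₁W)) + f₂(Tr(M₂W)) + ρ·Tr(W)` over `𝒲` to have rank at most 1. -/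
theorem stmt9 (E : EuclideanSpace ℝ (Fin 2)) (hE : E ≠ 0) (R X : ℝ)
    (hR : R ≠ 0) (hX : X ≠ 0) (Imax : ℝ) (hI : 0 < Imax)
    (M₁ M₂ : Matrix (Fin 3) (Fin 3) ℝ)
    (hM₁ : M₁ ∈ ({MP E R, MQ E X, MV E R X} : Set (Matrix (Fin 3) (Fin 3) ℝ)))
    (hM₂ : M₂ ∈ ({MP E R, MQ E X, MV E R X} : Set (Matrix (Fin 3) (Fin 3) ℝ)))
    (hMne : M₁ ≠ M₂)
    (f₁ f₂ : ℝ → ℝ)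
    (hf₁ : ConvexOn ℝ Set.univ f₁) (hf₁' : Differentiable ℝ f₁)
    (hf₂ : ConvexOn ℝ Set.univ f₂) (hf₂' : Differentiable ℝ f₂)
    (ρ : ℝ) (hρ : 0 < ρ)
    (Wstar : Matrix (Fin 3) (Fin 3) ℝ) (hWstar : Wstar ∈ Wset Imax)
    (hmin : ∀ W ∈ Wset Imax,
      f₁ ((M₁ * Wstar).trace) + f₂ ((M₂ * Wstar).trace) + ρ * Wstar.trace ≤
      f₁ ((M₁ * W).trace) + f₂ ((M₂ * W).trace) + ρ * W.trace) :
    Wstar.rank ≤ 1 := by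
  by_contra hrank
  push_neg at hrank
  -- basic facts about Wstar
  obtain ⟨hWpsd, hWI, hW22⟩ := hWstar
  have hWsym : Wstarᵀ = Wstar := herm_sym Wstar hWpsd.1
  have hWq : ∀ z, 0 ≤ z ⬝ᵥ Wstar.mulVec z := by
    intro z
    have := hWpsd.dotProduct_mulVec_nonneg z
    simpa using this
  -- Step 1: structural data for M₁ and M₂
  have hp := E_ne E hE
  have hMP : ∀ B : Matrix (Fin 3) (Fin 3) ℝ, B 2 2 = 0 →
      (MP E R * B).trace = (3 * R / 2) * (B 0 0 + B 1 1)
        + ((3 / 2 * E 0) * (B 2 0 + B 0 2) + (3 / 2 * E 1) * (B 2 1 + B 1 2)) / 2 := by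
    intro B hB
    rw [MP, trace_Mmat_mul, hB]
    have e0 : ((3 / 2 : ℝ) • E) 0 = 3 / 2 * E 0 := rfl
    have e1 : ((3 / 2 : ℝ) • E) 1 = 3 / 2 * E 1 := rfl
    rw [e0, e1]; ring
  have hMQ : ∀ B : Matrix (Fin 3) (Fin 3) ℝ, B 2 2 = 0 →
      (MQ E X * B).trace = (3 * X / 2) * (B 0 0 + B 1 1)
        + ((3 / 2 * E 1) * (B 2 0 + B 0 2) + (-(3 / 2) * E 0) * (B 2 1 + B 1 2)) / 2 := by
    intro B hB
    rw [MQ, trace_Mmat_mul, hB]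
    have e0 : ((3 / 2 : ℝ) • Jv E) 0 = 3 / 2 * Jv E 0 := rfl
    have e1 : ((3 / 2 : ℝ) • Jv E) 1 = 3 / 2 * Jv E 1 := rfl
    rw [e0, e1, Jv_0, Jv_1]; ring
  have hMV : ∀ B : Matrix (Fin 3) (Fin 3) ℝ, B 2 2 = 0 →
      (MV E R X * B).trace = (R ^ 2 + X ^ 2) * (B 0 0 + B 1 1)
        + ((2 * (R * E 0 + X * E 1)) * (B 2 0 + B 0 2) + (2 * (-X * E 0 + R * E 1)) * (B 2 1 + B 1 2)) / 2 := by
    intro B hB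
    rw [MV, trace_Mmat_mul, hB]
    have e0 : ((2 : ℝ) • ZtE R X E) 0 = 2 * ZtE R X E 0 := rfl
    have e1 : ((2 : ℝ) • ZtE R X E) 1 = 2 * ZtE R X E 1 := rfl
    rw [e0, e1, ZtE_0, ZtE_1]; ring
  have key : ∃ α₁ b10 b11 α₂ b20 b21 : ℝ,
      (∀ B : Matrix (Fin 3) (Fin 3) ℝ, B 2 2 = 0 →
        (M₁ * B).trace = α₁ * (B 0 0 + B 1 1) + (b10 * (B 2 0 + B 0 2) + b11 * (B 2 1 + B 1 2)) / 2) ∧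
      (∀ B : Matrix (Fin 3) (Fin 3) ℝ, B 2 2 = 0 →
        (M₂ * B).trace = α₂ * (B 0 0 + B 1 1) + (b20 * (B 2 0 + B 0 2) + b21 * (B 2 1 + B 1 2)) / 2) ∧
      b10 * b21 - b11 * b20 ≠ 0 := by
    simp only [Set.mem_insert_iff, Set.mem_singleton_iff] at hM₁ hM₂
    rcases hM₁ with h1 | h1 | h1 <;> rcases hM₂ with h2 | h2 | h2
    · exact absurd (h1.trans h2.symm) hMne
    · refine ⟨_, _, _, _, _, _, by rw [h1]; exact hMP, by rw [h2]; exact hMQ, ?_⟩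
      intro h; nlinarith
    · refine ⟨_, _, _, _, _, _, by rw [h1]; exact hMP, by rw [h2]; exact hMV, ?_⟩
      intro h
      have h' : X * (E 0 ^ 2 + E 1 ^ 2) = 0 := by linear_combination (-1/3) * h
      rcases mul_eq_zero.mp h' with hc | hc
      · exact hX hc
      · linarith
    · refine ⟨_, _, _, _, _, _, by rw [h1]; exact hMQ, by rw [h2]; exact hMP, ?_⟩
      intro h; nlinarith
    · exact absurd (h1.trans h2.symm) hMne
    · refine ⟨_, _, _, _, _, _, by rw [h1]; exact hMQ, by rw [h2]; exact hMV, ?_⟩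
      intro h
      have h' : R * (E 0 ^ 2 + E 1 ^ 2) = 0 := by linear_combination (1/3) * h
      rcases mul_eq_zero.mp h' with hc | hc
      · exact hR hc
      · linarith
    · refine ⟨_, _, _, _, _, _, by rw [h1]; exact hMV, by rw [h2]; exact hMP, ?_⟩
      intro h
      have h' : X * (E 0 ^ 2 + E 1 ^ 2) = 0 := by linear_combination (1/3) * h
      rcases mul_eq_zero.mp h' with hc | hc
      · exact hX hc
      · linarith
    · refine ⟨_, _, _, _, _, _, by rw [h1]; exact hMV, by rw [h2]; exact hMQ, ?_⟩
      intro h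
      have h' : R * (E 0 ^ 2 + E 1 ^ 2) = 0 := by linear_combination (-1/3) * h
      rcases mul_eq_zero.mp h' with hc | hc
      · exact hR hc
      · linarith
    · exact absurd (h1.trans h2.symm) hMne
  obtain ⟨α₁, b10, b11, α₂, b20, b21, hP1, hP2, hdet⟩ := key
  -- Cramer solution
  obtain ⟨dt, hdt⟩ : ∃ x : ℝ, x = b10 * b21 - b11 * b20 := ⟨_, rfl⟩
  obtain ⟨d0, hd0⟩ : ∃ x : ℝ, x = (-2 * α₁ * b21 + 2 * α₂ * b11) / dt := ⟨_, rfl⟩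
  obtain ⟨d1, hd1⟩ : ∃ x : ℝ, x = (-2 * α₂ * b10 + 2 * α₁ * b20) / dt := ⟨_, rfl⟩
  have hcr1 : b10 * d0 + b11 * d1 = -2 * α₁ := by
    rw [hd0, hd1, hdt]; field_simp; ring
  have hcr2 : b20 * d0 + b21 * d1 = -2 * α₂ := by
    have hdt' : dt ≠ 0 := hdt ▸ hdet
    rw [hd0, hd1]; field_simp; rw [hdt]; ring
  -- kernel dimension bound
  have hkerdim : Module.finrank ℝ (LinearMap.ker Wstar.mulVecLin) ≤ 1 := by
    have hrn : Wstar.rank + Module.finrank ℝ (LinearMap.ker Wstar.mulVecLin) = 3 := by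
      rw [Matrix.rank]
      have := LinearMap.finrank_range_add_finrank_ker Wstar.mulVecLin
      simpa using this
    omega
  by_cases hkc : ∃ v : Fin 3 → ℝ, v ≠ 0 ∧ Wstar.mulVec v = 0
  · -- rank-two case
    obtain ⟨v, hv, hWv⟩ := hkc
    have hker : ∀ w, Wstar.mulVec w = 0 → ∃ c : ℝ, w = c • v := by
      intro w hw
      have hle : Submodule.span ℝ {v} ≤ LinearMap.ker Wstar.mulVecLin := by
        rw [Submodule.span_singleton_le_iff_mem]
        exact LinearMap.mem_ker.mpr hWv
      have heq : Submodule.span ℝ {v} = LinearMap.ker Wstar.mulVecLin := by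
        apply Submodule.eq_of_le_of_finrank_le hle
        rw [finrank_span_singleton hv]
        exact hkerdim
      have hwmem : w ∈ Submodule.span ℝ ({v} : Set (Fin 3 → ℝ)) := by
        rw [heq]; exact LinearMap.mem_ker.mpr hw
      obtain ⟨c, hc⟩ := Submodule.mem_span_singleton.mp hwmem
      exact ⟨c, hc.symm⟩
    -- v 0, v 1 not both zero
    have hq : 0 < v 0 ^ 2 + v 1 ^ 2 := by
      by_contra hq0
      push_neg at hq0
      have h0 : v 0 = 0 := by nlinarith [sq_nonneg (v 0), sq_nonneg (v 1)]
      have h1 : v 1 = 0 := by nlinarith [sq_nonneg (v 0), sq_nonneg (v 1)]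
      have h2 : (Wstar.mulVec v) 2 = 0 := by rw [hWv]; rfl
      have h2' : v 2 = 0 := by
        simp only [Matrix.mulVec, dotProduct, Fin.sum_univ_three, h0, h1] at h2
        rw [hW22] at h2
        linarith [h2]
      exact hv (by funext i; fin_cases i <;> assumption)
    obtain ⟨s, hs⟩ : ∃ x : ℝ, x = -((v 0 ^ 2 + v 1 ^ 2) + 2 * v 2 * (d0 * v 0 + d1 * v 1) + 2)
        / ((v 0 ^ 2 + v 1 ^ 2) ^ 2) := ⟨_, rfl⟩
    obtain ⟨D, hD⟩ : ∃ D' : Matrix (Fin 3) (Fin 3) ℝ, D' =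
      !![1/2 + s * (v 0 ^ 2 - (v 0 ^ 2 + v 1 ^ 2)/2), s * v 0 * v 1, d0/2;
         s * v 0 * v 1, 1/2 + s * (v 1 ^ 2 - (v 0 ^ 2 + v 1 ^ 2)/2), d1/2;
         d0/2, d1/2, 0] := ⟨_, rfl⟩
    have hDsym : Dᵀ = D := by
      rw [hD]
      ext i j
      fin_cases i <;> fin_cases j <;> simp
    have hD22 : D 2 2 = 0 := by rw [hD]; simp
    have htrD : D.trace = 1 := by
      rw [trace_expand, hD]
      simp
      ring
    have hM1D : (M₁ * D).trace = 0 := by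
      rw [hP1 D hD22, hD]
      simp
      linear_combination (1/2) * hcr1
    have hM2D : (M₂ * D).trace = 0 := by
      rw [hP2 D hD22, hD]
      simp
      linear_combination (1/2) * hcr2
    have hqne : v 0 ^ 2 + v 1 ^ 2 ≠ 0 := ne_of_gt hq
    have hsq : s * ((v 0 ^ 2 + v 1 ^ 2) ^ 2)
        = -((v 0 ^ 2 + v 1 ^ 2) + 2 * v 2 * (d0 * v 0 + d1 * v 1) + 2) := by
      rw [hs]; field_simp
    have hDv : v ⬝ᵥ D.mulVec v = -1 := by
      rw [hD]
      simp [Matrix.mulVec, dotProduct, Fin.sum_univ_three]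
      linear_combination (1/2) * hsq
    obtain ⟨t, ht, hpert⟩ := aux_perturb Wstar D hWsym hDsym hWq v hv hWv hker hDv
    exact final_contra Imax ρ hρ M₁ M₂ f₁ f₂ Wstar ⟨hWpsd, hWI, hW22⟩ hmin D t ht
      hDsym hD22 htrD hM1D hM2D hpert
  · -- positive definite case
    push_neg at hkc
    have hpd : ∀ x, x ≠ 0 → Wstar.mulVec x ≠ 0 := fun x hx => hkc x hx
    obtain ⟨D, hD⟩ : ∃ D' : Matrix (Fin 3) (Fin 3) ℝ, D' =
      !![1/2, 0, d0/2; 0, 1/2, d1/2; d0/2, d1/2, 0] := ⟨_, rfl⟩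
    have hDsym : Dᵀ = D := by
      rw [hD]
      ext i j
      fin_cases i <;> fin_cases j <;> simp
    have hD22 : D 2 2 = 0 := by rw [hD]; simp
    have htrD : D.trace = 1 := by
      rw [trace_expand, hD]
      simp
      ring
    have hM1D : (M₁ * D).trace = 0 := by
      rw [hP1 D hD22, hD]
      simp
      linear_combination (1/2) * hcr1
    have hM2D : (M₂ * D).trace = 0 := by
      rw [hP2 D hD22, hD]
      simp
      linear_combination (1/2) * hcr2
    obtain ⟨t, ht, hpert⟩ := aux_perturb_pd Wstar D hWsym hWq hpd
    exact final_contra Imax ρ hρ M₁ M₂ f₁ f₂ Wstar ⟨hWpsd, hWI, hW22⟩ hmin D t ht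
      hDsym hD22 htrD hM1D hM2D hpert
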